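/- Under the hypotheses of the main coresets theorem — X ∈ ℝ^{n×p} with XᵀX invertible, y ∈ ℝⁿ with y ≠ X β̂_OLS, X* with X*ᵀX invertible, ‖X − X*‖₂ ≤ ε′‖X‖₂, and 0 < ε′ ≤ (1/κ²(X)) · (1 + (κ²(X)+1)‖y‖ / (ε^{1/2} ‖y − X β̂_OLS‖))^{-1} for a given ε > 0 — the fitted values satisfy ‖X β̂_OLS − X β̃‖² ≤ ε ‖y − X β̂_OLS‖², where β̃ = (X*ᵀX)⁻¹X*ᵀy. -/

import Mathlib

open Matrix
open scoped Matrix.Norms.L2Operator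

/-- Euclidean norm of a vector in `ℝⁿ`. -/
noncomputable def vnorm {n : ℕ} (v : Fin n → ℝ) : ℝ := Real.sqrt (∑ i, v i ^ 2)

lemma vnorm_eq {n : ℕ} (v : Fin n → ℝ) :
    vnorm v = ‖(EuclideanSpace.equiv (Fin n) ℝ).symm v‖ := by
  simp [vnorm, EuclideanSpace.norm_eq, Real.norm_eq_abs, sq_abs]

lemma vnorm_nonneg {n : ℕ} (v : Fin n → ℝ) : 0 ≤ vnorm v := Real.sqrt_nonneg _

lemma vnorm_pos {n : ℕ} {v : Fin n → ℝ} (hv : v ≠ 0) : 0 < vnorm v := by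
  rw [vnorm_eq]
  rw [norm_pos_iff]
  intro h
  apply hv
  have := congrArg (EuclideanSpace.equiv (Fin n) ℝ) h
  simpa using this

lemma vnorm_mulVec_le {n p : ℕ} (M : Matrix (Fin n) (Fin p) ℝ) (v : Fin p → ℝ) :
    vnorm (M *ᵥ v) ≤ ‖M‖ * vnorm v := by
  rw [vnorm_eq, vnorm_eq]
  exact Matrix.l2_opNorm_mulVec M ((EuclideanSpace.equiv (Fin p) ℝ).symm v)

lemma vnorm_sub_le {n : ℕ} (u v : Fin n → ℝ) :
    vnorm (u - v) ≤ vnorm u + vnorm v := by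
  rw [vnorm_eq, vnorm_eq, vnorm_eq]
  exact norm_sub_le _ _

lemma l2_norm_transpose {n p : ℕ} (M : Matrix (Fin n) (Fin p) ℝ) : ‖Mᵀ‖ = ‖M‖ := by
  rw [← Matrix.conjTranspose_eq_transpose_of_trivial]
  exact Matrix.l2_opNorm_conjTranspose M

set_option maxHeartbeats 1600000 in
/-- **Fitted-value deviation bound.** Under the hypotheses of the main
coresets theorem, the fitted values satisfy
`‖Xβ̂_OLS − Xβ̃‖² ≤ ε‖y − Xβ̂_OLS‖²`. -/
theorem core_elements_fitted_values_bound
    (n p : ℕ) (hp : 1 ≤ p) (hpn : p ≤ n)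
    (X Xs : Matrix (Fin n) (Fin p) ℝ) (y : Fin n → ℝ) (ε ε' : ℝ)
    (hX : IsUnit (Xᵀ * X).det) (hXs : IsUnit (Xsᵀ * X).det)
    (βOLS : Fin p → ℝ) (hβOLS : βOLS = (Xᵀ * X)⁻¹ *ᵥ (Xᵀ *ᵥ y))
    (βt : Fin p → ℝ) (hβt : βt = (Xsᵀ * X)⁻¹ *ᵥ (Xsᵀ *ᵥ y))
    (hy : y ≠ X *ᵥ βOLS) (hε : 0 < ε)
    (κ2 : ℝ) (hκ2 : κ2 = ‖X‖ ^ 2 * ‖(Xᵀ * X)⁻¹‖)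
    (hL : ‖X - Xs‖ ≤ ε' * ‖X‖)
    (hε'pos : 0 < ε')
    (hε'le : ε' ≤ (1 / κ2) *
      (1 + (κ2 + 1) * vnorm y / (Real.sqrt ε * vnorm (y - X *ᵥ βOLS)))⁻¹) :
    vnorm (X *ᵥ βOLS - X *ᵥ βt) ^ 2 ≤ ε * vnorm (y - X *ᵥ βOLS) ^ 2 := by
  haveI : Nonempty (Fin p) := ⟨⟨0, hp⟩⟩
  set A := Xᵀ * X with hA
  -- basic matrix facts
  have hAinv : A⁻¹ * A = 1 := Matrix.nonsing_inv_mul A hX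
  have hBt : (Xsᵀ * X) *ᵥ βt = Xsᵀ *ᵥ y := by
    rw [hβt, Matrix.mulVec_mulVec, Matrix.mul_nonsing_inv _ hXs, Matrix.one_mulVec]
  -- positivity of κ2
  have hXne : X ≠ 0 := by
    intro h
    exact hX.ne_zero (by rw [hA, h]; simp)
  have hAinvne : A⁻¹ ≠ 0 := by
    intro h
    rw [h, Matrix.zero_mul] at hAinv
    have := congrArg Matrix.det hAinv
    simp [Matrix.det_zero] at this
  have hXpos : 0 < ‖X‖ := norm_pos_iff.mpr hXne
  have hAinvpos : 0 < ‖A⁻¹‖ := norm_pos_iff.mpr hAinvne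
  have hκpos : 0 < κ2 := by rw [hκ2]; positivity
  -- key identity : βOLS - βt = A⁻¹ (X - Xs)ᵀ (y - X βt)
  have hkey : βOLS - βt = A⁻¹ *ᵥ ((X - Xs)ᵀ *ᵥ (y - X *ᵥ βt)) := by
    have h1 : (X - Xs)ᵀ *ᵥ (y - X *ᵥ βt) = Xᵀ *ᵥ y - A *ᵥ βt := by
      rw [Matrix.transpose_sub, Matrix.sub_mulVec, Matrix.mulVec_sub, Matrix.mulVec_sub,
        Matrix.mulVec_mulVec, Matrix.mulVec_mulVec, hBt]
      rw [hA]
      abel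
    rw [h1, Matrix.mulVec_sub, Matrix.mulVec_mulVec, Matrix.mulVec_mulVec, hAinv,
      Matrix.one_mulVec, hβOLS, Matrix.mulVec_mulVec]
  -- abbreviations
  set r := vnorm (y - X *ᵥ βOLS) with hr
  set d := vnorm (X *ᵥ βOLS - X *ᵥ βt) with hd
  set rt := vnorm (y - X *ᵥ βt) with hrt
  have hrpos : 0 < r := vnorm_pos (sub_ne_zero_of_ne hy)
  have hdnn : 0 ≤ d := vnorm_nonneg _
  have hrtnn : 0 ≤ rt := vnorm_nonneg _
  have hynn : 0 ≤ vnorm y := vnorm_nonneg _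
  -- d ≤ ε' κ2 rt
  have hEnorm : ‖(X - Xs)ᵀ‖ ≤ ε' * ‖X‖ := by rw [l2_norm_transpose]; exact hL
  have hdle : d ≤ ε' * κ2 * rt := by
    have e1 : X *ᵥ βOLS - X *ᵥ βt = X *ᵥ (A⁻¹ *ᵥ ((X - Xs)ᵀ *ᵥ (y - X *ᵥ βt))) := by
      rw [← hkey, Matrix.mulVec_sub]
    have c1 : d ≤ ‖X‖ * vnorm (A⁻¹ *ᵥ ((X - Xs)ᵀ *ᵥ (y - X *ᵥ βt))) := by
      rw [hd, e1]; exact vnorm_mulVec_le _ _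
    have c2 : vnorm (A⁻¹ *ᵥ ((X - Xs)ᵀ *ᵥ (y - X *ᵥ βt)))
        ≤ ‖A⁻¹‖ * vnorm ((X - Xs)ᵀ *ᵥ (y - X *ᵥ βt)) := vnorm_mulVec_le _ _
    have c3 : vnorm ((X - Xs)ᵀ *ᵥ (y - X *ᵥ βt)) ≤ (ε' * ‖X‖) * rt :=
      (vnorm_mulVec_le _ _).trans (by
        apply mul_le_mul_of_nonneg_right hEnorm hrtnn)
    have : d ≤ ‖X‖ * (‖A⁻¹‖ * ((ε' * ‖X‖) * rt)) := by
      refine c1.trans (mul_le_mul_of_nonneg_left (c2.trans ?_) hXpos.le)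
      exact mul_le_mul_of_nonneg_left c3 hAinvpos.le
    calc d ≤ ‖X‖ * (‖A⁻¹‖ * ((ε' * ‖X‖) * rt)) := this
      _ = ε' * κ2 * rt := by rw [hκ2]; ring
  -- rt ≤ r + d
  have hrtle : rt ≤ r + d := by
    have : y - X *ᵥ βt = (y - X *ᵥ βOLS) + (X *ᵥ βOLS - X *ᵥ βt) := by abel
    rw [hrt, this, hr, hd]
    rw [vnorm_eq, vnorm_eq, vnorm_eq]
    exact norm_add_le _ _
  -- r ≤ (κ2 + 1) * vnorm y
  have hrle : r ≤ (κ2 + 1) * vnorm y := by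
    have c1 : vnorm (X *ᵥ βOLS) ≤ κ2 * vnorm y := by
      rw [hβOLS]
      calc vnorm (X *ᵥ ((A⁻¹) *ᵥ (Xᵀ *ᵥ y)))
          ≤ ‖X‖ * vnorm ((A⁻¹) *ᵥ (Xᵀ *ᵥ y)) := vnorm_mulVec_le _ _
        _ ≤ ‖X‖ * (‖A⁻¹‖ * vnorm (Xᵀ *ᵥ y)) := by
            exact mul_le_mul_of_nonneg_left (vnorm_mulVec_le _ _) hXpos.le
        _ ≤ ‖X‖ * (‖A⁻¹‖ * (‖Xᵀ‖ * vnorm y)) := by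
            refine mul_le_mul_of_nonneg_left
              (mul_le_mul_of_nonneg_left (vnorm_mulVec_le _ _) hAinvpos.le) hXpos.le
        _ = κ2 * vnorm y := by rw [l2_norm_transpose, hκ2]; ring
    calc r ≤ vnorm y + vnorm (X *ᵥ βOLS) := vnorm_sub_le _ _
      _ ≤ vnorm y + κ2 * vnorm y := by linarith
      _ = (κ2 + 1) * vnorm y := by ring
  -- arithmetic
  set s := Real.sqrt ε with hs
  have hspos : 0 < s := Real.sqrt_pos.mpr hε
  set t := (κ2 + 1) * vnorm y / (s * r) with ht
  have httpos : 0 < 1 + t := by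
    have : 0 ≤ t := by positivity
    linarith
  have hc1 : ε' * κ2 ≤ (1 + t)⁻¹ := by
    have := mul_le_mul_of_nonneg_right hε'le hκpos.le
    calc ε' * κ2 ≤ (1 / κ2) * (1 + t)⁻¹ * κ2 := this
      _ = (1 + t)⁻¹ := by field_simp
  have hts : 1 / s ≤ t := by
    rw [ht, div_le_div_iff₀ hspos (by positivity)]
    nlinarith
  have hc2 : (1 + t)⁻¹ ≤ s / (s + 1) := by
    have h1 : (1 + 1/s)⁻¹ = s / (s + 1) := by
      rw [one_add_div (ne_of_gt hspos), inv_div, add_comm]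
    rw [← h1]
    apply inv_anti₀ (by positivity)
    linarith
  have hc : ε' * κ2 * (s + 1) ≤ s := by
    have h2 := hc1.trans hc2
    rw [le_div_iff₀ (by positivity)] at h2
    exact h2
  -- conclude d ≤ s * r
  have hdsr : d ≤ s * r := by
    have A1 : d * (s + 1) ≤ (ε' * κ2 * rt) * (s + 1) :=
      mul_le_mul_of_nonneg_right hdle (by positivity)
    have A2 : (ε' * κ2 * (s + 1)) * rt ≤ (ε' * κ2 * (s + 1)) * (r + d) :=
      mul_le_mul_of_nonneg_left hrtle (by positivity)
    have A3 : (ε' * κ2 * (s + 1)) * (r + d) ≤ s * (r + d) :=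
      mul_le_mul_of_nonneg_right hc (by positivity)
    nlinarith
  calc d ^ 2 ≤ (s * r) ^ 2 := by nlinarith
    _ = ε * r ^ 2 := by rw [mul_pow, hs, Real.sq_sqrt hε.le]
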